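/- Let R be a term rewriting system over a signature Σ and let T be a set of ground terms over Σ. Then R is terminating on T (i.e., SN_T(R) holds) if and only if there exists a well-founded monotone partial Σ-algebra (A,[[·]],≻) such that T is defined (i.e., [[t]] is defined for every t ∈ T) and ≻ is a partial model for R. -/

import Mathlib

namespace LocalTerm

/-- Terms over a signature `F` with arities `ar` and variables `X`. -/
inductive Tm (F : Type) (ar : F → ℕ) (X : Type) : Type
  | var : X → Tm F ar X
  | app : (f : F) → (Fin (ar f) → Tm F ar X) → Tm F ar X

/-- Substitution. -/
def subst {F : Type} {ar : F → ℕ} {X Y : Type} (σ : X → Tm F ar Y) :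
    Tm F ar X → Tm F ar Y
  | .var x => σ x
  | .app f ts => .app f fun i => subst σ (ts i)

/-- One-step rewrite relation of a set `R` of rules (over variables `X`),
acting on terms over variables `V`: a rule instance inside a one-hole context. -/
inductive Rw {F : Type} {ar : F → ℕ} {X V : Type}
    (R : Set (Tm F ar X × Tm F ar X)) : Tm F ar V → Tm F ar V → Prop
  | rule {l r : Tm F ar X} (h : (l, r) ∈ R) (σ : X → Tm F ar V) :
      Rw R (subst σ l) (subst σ r)
  | ctxt {f : F} {ts : Fin (ar f) → Tm F ar V} (i : Fin (ar f)) {t' : Tm F ar V} :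
      Rw R (ts i) t' → Rw R (Tm.app f ts) (Tm.app f (Function.update ts i t'))

/-- The set of variables of a term. -/
def Vars {F : Type} {ar : F → ℕ} {X : Type} : Tm F ar X → Set X
  | .var x => {x}
  | .app _ ts => ⋃ i, Vars (ts i)

/-- `R` is a TRS: no left-hand side is a variable,
and all variables of a right-hand side occur in the left-hand side. -/
def IsTRS {F : Type} {ar : F → ℕ} {X : Type}
    (R : Set (Tm F ar X × Tm F ar X)) : Prop :=
  ∀ p ∈ R, (∀ x : X, p.1 ≠ Tm.var x) ∧ Vars p.2 ⊆ Vars p.1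

/-- A partial interpretation of the function symbols in a set `A`:
for every `n`-ary symbol a partial function `Aⁿ ⇀ A`. -/
abbrev Interp (F : Type) (ar : F → ℕ) (A : Type) : Type :=
  ∀ f : F, (Fin (ar f) → A) → Option A

/-- `Eval I α t a` : the (partial) interpretation of `t` under assignment `α`
is defined and equal to `a`. -/
inductive Eval {F : Type} {ar : F → ℕ} {X A : Type}
    (I : Interp F ar A) (α : X → A) : Tm F ar X → A → Prop
  | var (x : X) : Eval I α (Tm.var x) (α x)
  | app {f : F} {ts : Fin (ar f) → Tm F ar X} (as : Fin (ar f) → A) {a : A}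
      (hts : ∀ i, Eval I α (ts i) (as i)) (hI : I f as = some a) :
      Eval I α (Tm.app f ts) a

/-- A set `T` of ground terms is defined if the interpretation of
every `t ∈ T` is defined. -/
def DefinedOn {F : Type} {ar : F → ℕ} {A : Type}
    (I : Interp F ar A) (T : Set (Tm F ar Empty)) : Prop :=
  ∀ t ∈ T, ∃ a : A, Eval I Empty.elim t a

/-- `succ` is a partial model for `R`: whenever the interpretation of a
left-hand side is defined, the right-hand side is defined as well and the
interpretations are related by `succ`. -/
def PartialModel {F : Type} {ar : F → ℕ} {X A : Type}
    (I : Interp F ar A) (succ : A → A → Prop)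
    (R : Set (Tm F ar X × Tm F ar X)) : Prop :=
  ∀ p ∈ R, ∀ (α : X → A) (a : A), Eval I α p.1 a →
    ∃ b : A, Eval I α p.2 b ∧ succ a b

/-- A partial function is closed w.r.t. a relation. -/
def ClosedFn {A : Type} {n : ℕ} (g : (Fin n → A) → Option A)
    (r : A → A → Prop) : Prop :=
  ∀ (v : Fin n → A) (i : Fin n) (b : A), r (v i) b → (g v).isSome →
    (g (Function.update v i b)).isSome

/-- A partial function is monotone w.r.t. a relation. -/
def MonoFn {A : Type} {n : ℕ} (g : (Fin n → A) → Option A)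
    (r : A → A → Prop) : Prop :=
  ∀ (v : Fin n → A) (i : Fin n) (b : A) (x y : A), r (v i) b →
    g v = some x → g (Function.update v i b) = some y → r x y

/-- `(A, I, r)` is a monotone partial algebra: every interpretation is
closed and monotone with respect to `r`. -/
def MonoAlg {F : Type} {ar : F → ℕ} {A : Type}
    (I : Interp F ar A) (r : A → A → Prop) : Prop :=
  ∀ f : F, ClosedFn (I f) r ∧ MonoFn (I f) r

/-- Well-foundedness: no infinite descending sequence. -/
def WFrel {A : Type} (r : A → A → Prop) : Prop :=
  ¬ ∃ f : ℕ → A, ∀ n : ℕ, r (f n) (f (n + 1))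

/-- `r` is terminating on `T`: no element of `T` starts an infinite `r`-sequence. -/
def SNon {B : Type} (r : B → B → Prop) (T : Set B) : Prop :=
  ∀ t ∈ T, ¬ ∃ f : ℕ → B, f 0 = t ∧ ∀ n : ℕ, r (f n) (f (n + 1))

/-- Relative termination on `T`: no element of `T` starts an infinite
`(r ∪ s)`-sequence containing infinitely many `r`-steps. -/
def SNrelOn {B : Type} (r s : B → B → Prop) (T : Set B) : Prop :=
  ∀ t ∈ T, ¬ ∃ f : ℕ → B, f 0 = t ∧
    (∀ n : ℕ, r (f n) (f (n + 1)) ∨ s (f n) (f (n + 1))) ∧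
    (∀ m : ℕ, ∃ n : ℕ, m ≤ n ∧ r (f n) (f (n + 1)))

/-- Relative termination (on everything). -/
def SNrel {B : Type} (r s : B → B → Prop) : Prop := SNrelOn r s Set.univ


section Aux

open Classical

variable {F : Type} {ar : F → ℕ}

/-- `s` admits no infinite rewrite sequence. -/
def SNt {X V : Type} (R : Set (Tm F ar X × Tm F ar X)) (s : Tm F ar V) : Prop :=
  ¬ ∃ f : ℕ → Tm F ar V, f 0 = s ∧ ∀ n, Rw R (f n) (f (n + 1))

theorem snt_step {X V : Type} {R : Set (Tm F ar X × Tm F ar X)} {s s' : Tm F ar V}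
    (h : SNt R s) (hs : Rw R s s') : SNt R s' := by
  rintro ⟨f, hf0, hfs⟩
  refine h ⟨fun n => Nat.rec s (fun n _ => f n) n, rfl, ?_⟩
  intro n
  cases n with
  | zero => simpa [hf0] using hs
  | succ n => exact hfs n

theorem snt_sub {X V : Type} {R : Set (Tm F ar X × Tm F ar X)} {f : F}
    {ts : Fin (ar f) → Tm F ar V} (h : SNt R (Tm.app f ts)) (i : Fin (ar f)) :
    SNt R (ts i) := by
  rintro ⟨g, hg0, hgs⟩
  refine h ⟨fun n => Tm.app f (Function.update ts i (g n)), ?_, ?_⟩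
  · simp [hg0]
  · intro n
    have h1 : Rw R (Function.update ts i (g n) i) (g (n + 1)) := by simpa using hgs n
    have h2 := Rw.ctxt (R := R) (f := f) (ts := Function.update ts i (g n)) i h1
    simpa [Function.update_idem] using h2

theorem eval_det {X A : Type} {I : Interp F ar A} {α : X → A} {t : Tm F ar X} {a b : A}
    (h1 : Eval I α t a) (h2 : Eval I α t b) : a = b := by
  induction h1 generalizing b with
  | var x => cases h2; rfl
  | app as hts hI ih =>
    cases h2 with
    | app as' hts' hI' =>
      have has : as = as' := funext fun i => ih i (hts' i)
      rw [has] at hI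
      rw [hI] at hI'
      exact Option.some.inj hI'

theorem vars_eval_subst {X V A : Type} {I : Interp F ar A} {α : V → A}
    {σ : X → Tm F ar V} : ∀ {t : Tm F ar X} {a : A},
    Eval I α (subst σ t) a → ∀ x ∈ Vars t, ∃ c, Eval I α (σ x) c
  | .var x, a, h, y, hy => by
    have : y = x := by simpa [Vars] using hy
    subst this
    exact ⟨a, h⟩
  | .app f ts, a, h, y, hy => by
    cases h with
    | app as hts hI =>
      obtain ⟨i, hi⟩ : ∃ i, y ∈ Vars (ts i) := by simpa [Vars] using hy
      exact vars_eval_subst (hts i) y hi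

theorem eval_of_subst {X V A : Type} {I : Interp F ar A} {α : V → A}
    {σ : X → Tm F ar V} {β : X → A} : ∀ {t : Tm F ar X} {a : A},
    (∀ x ∈ Vars t, Eval I α (σ x) (β x)) → Eval I α (subst σ t) a → Eval I β t a
  | .var x, a, hβ, h => by
    have hx := hβ x (by simp [Vars])
    have hax : a = β x := eval_det h hx
    rw [hax]
    exact Eval.var x
  | .app f ts, a, hβ, h => by
    cases h with
    | app as hts hI =>
      exact Eval.app as
        (fun i => eval_of_subst
          (fun x hx => hβ x (by simp only [Vars, Set.mem_iUnion]; exact ⟨i, hx⟩))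
          (hts i)) hI

theorem eval_to_subst {X V A : Type} {I : Interp F ar A} {α : V → A}
    {σ : X → Tm F ar V} {β : X → A} {t : Tm F ar X} {b : A}
    (h : Eval I β t b) :
    (∀ x ∈ Vars t, Eval I α (σ x) (β x)) → Eval I α (subst σ t) b := by
  induction h with
  | var x =>
    intro hβ
    exact hβ x (by simp [Vars])
  | app as hts hI ih =>
    intro hβ
    exact Eval.app as
      (fun i => ih i (fun x hx => hβ x (by simp only [Vars, Set.mem_iUnion]; exact ⟨i, hx⟩)))
      hI

theorem step_eval {X V A : Type} [Nonempty A] {R : Set (Tm F ar X × Tm F ar X)}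
    (hR : IsTRS R) {I : Interp F ar A} {succ : A → A → Prop}
    (hM : MonoAlg I succ) (hPM : PartialModel I succ R) {s s' : Tm F ar V}
    (hs : Rw R s s') : ∀ {α : V → A} {a : A}, Eval I α s a →
    ∃ b, Eval I α s' b ∧ succ a b := by
  induction hs with
  | @rule l r h σ =>
    intro α a ha
    set β : X → A := fun x =>
      if hx : ∃ c, Eval I α (σ x) c then hx.choose else Classical.arbitrary A with hβdef
    have hβ1 : ∀ x ∈ Vars l, Eval I α (σ x) (β x) := by
      intro x hx
      have hex := vars_eval_subst ha x hx
      simp only [hβdef, dif_pos hex]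
      exact hex.choose_spec
    have hl : Eval I β l a := eval_of_subst hβ1 ha
    obtain ⟨b, hb, hab⟩ := hPM (l, r) h β a hl
    exact ⟨b, eval_to_subst hb (fun x hx => hβ1 x ((hR (l, r) h).2 hx)), hab⟩
  | @ctxt f ts i t' hstep ih =>
    intro α a ha
    cases ha with
    | app as hts hI =>
      obtain ⟨b, hb, hab⟩ := ih (hts i)
      have hcl := (hM f).1 as i b hab (by simp [hI])
      obtain ⟨c, hc⟩ := Option.isSome_iff_exists.mp hcl
      have hmono := (hM f).2 as i b a c hab hI hc
      refine ⟨c, Eval.app (Function.update as i b) (fun j => ?_) hc, hmono⟩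
      by_cases hji : j = i
      · subst hji; simpa using hb
      · simpa [Function.update_of_ne hji] using hts j

theorem no_inf_chain {A : Type} {succ : A → A → Prop} (hWF : WFrel succ)
    (P : ℕ → A → Prop) (h0 : ∃ a, P 0 a)
    (hstep : ∀ n a, P n a → ∃ b, P (n + 1) b ∧ succ a b) : False := by
  let seq : (n : ℕ) → {a : A // P n a} := fun n =>
    Nat.rec ⟨h0.choose, h0.choose_spec⟩
      (fun n p => ⟨(hstep n p.1 p.2).choose, (hstep n p.1 p.2).choose_spec.1⟩) n
  exact hWF ⟨fun n => (seq n).1, fun n => (hstep n (seq n).1 (seq n).2).choose_spec.2⟩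

/-- The ground-term interpretation for the forward direction. -/
noncomputable def grdI {X : Type} (R : Set (Tm F ar X × Tm F ar X)) :
    Interp F ar (Tm F ar Empty) := fun f as =>
  if SNt R (Tm.app f as) then some (Tm.app f as) else none

theorem grdI_eq_some {X : Type} {R : Set (Tm F ar X × Tm F ar X)} {f : F}
    {as : Fin (ar f) → Tm F ar Empty} {a : Tm F ar Empty}
    (h : grdI R f as = some a) : SNt R a ∧ a = Tm.app f as := by
  unfold grdI at h
  split at h
  · cases h
    exact ⟨by assumption, rfl⟩
  · exact absurd h (by simp)

theorem grdI_pos {X : Type} {R : Set (Tm F ar X × Tm F ar X)} {f : F}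
    {as : Fin (ar f) → Tm F ar Empty} (h : SNt R (Tm.app f as)) :
    grdI R f as = some (Tm.app f as) := by
  unfold grdI
  rw [if_pos h]

theorem sn_eval {X : Type} {R : Set (Tm F ar X × Tm F ar X)} :
    ∀ {t : Tm F ar Empty}, SNt R t → Eval (grdI R) Empty.elim t t
  | .var x, _ => x.elim
  | .app f ts, h =>
    Eval.app ts (fun i => sn_eval (snt_sub h i)) (grdI_pos h)

theorem eval_eq_subst {X : Type} {R : Set (Tm F ar X × Tm F ar X)}
    {α : X → Tm F ar Empty} {t : Tm F ar X} {a : Tm F ar Empty}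
    (h : Eval (grdI R) α t a) : a = subst α t := by
  induction h with
  | var x => rfl
  | app as hts hI ih =>
    obtain ⟨_, rfl⟩ := grdI_eq_some hI
    exact congrArg _ (funext fun i => ih i)

theorem subst_eval {X : Type} {R : Set (Tm F ar X × Tm F ar X)}
    {α : X → Tm F ar Empty} : ∀ {t : Tm F ar X}, SNt R (subst α t) →
    Eval (grdI R) α t (subst α t)
  | .var x, _ => Eval.var x
  | .app f ts, h => by
    have h' : SNt R (Tm.app f fun i => subst α (ts i)) := h
    exact Eval.app (fun i => subst α (ts i))
      (fun i => subst_eval (snt_sub h' i)) (grdI_pos h')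

end Aux

/-- A TRS `R` is terminating on a set `T` of ground terms iff
there exists a well-founded monotone partial Σ-algebra `(A, I, succ)` such that
`T` is defined and `succ` is a partial model for `R`. -/
theorem local_termination_iff_wf_monotone_partial_algebra
    {F X : Type} {ar : F → ℕ}
    (R : Set (Tm F ar X × Tm F ar X)) (hR : IsTRS R)
    (T : Set (Tm F ar Empty)) :
    SNon (Rw R) T ↔
      ∃ (A : Type) (_ : Nonempty A) (I : Interp F ar A) (succ : A → A → Prop),
        MonoAlg I succ ∧ WFrel succ ∧ DefinedOn I T ∧ PartialModel I succ R := by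
  constructor
  · intro hSN
    by_cases hNE : Nonempty (Tm F ar Empty)
    · refine ⟨Tm F ar Empty, hNE, grdI R, fun a b => SNt R a ∧ Rw R a b, ?_, ?_, ?_, ?_⟩
      · -- monotone algebra
        intro f
        constructor
        · intro v i b hib hv
          have hsn : SNt R (Tm.app f v) := by
            by_contra hcon
            simp [grdI, hcon] at hv
          have hrw : Rw R (Tm.app f v) (Tm.app f (Function.update v i b)) :=
            Rw.ctxt i hib.2
          rw [grdI_pos (snt_step hsn hrw)]
          rfl
        · intro v i b x y hib hx hy
          obtain ⟨hsnx, rfl⟩ := grdI_eq_some hx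
          obtain ⟨_, rfl⟩ := grdI_eq_some hy
          exact ⟨hsnx, Rw.ctxt i hib.2⟩
      · -- well-founded
        rintro ⟨f, hf⟩
        exact (hf 0).1 ⟨f, rfl, fun n => (hf n).2⟩
      · -- T defined
        intro t ht
        exact ⟨t, sn_eval (hSN t ht)⟩
      · -- partial model
        rintro ⟨l, r⟩ hp α a ha
        cases hl : l with
        | var x => exact ((hR _ hp).1 x hl).elim
        | app f ts =>
          subst hl
          have hsn : SNt R a := by
            cases ha with
            | app as hts hI => exact (grdI_eq_some hI).1
          have heq : a = subst α (Tm.app f ts) := eval_eq_subst ha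
          have hrw : Rw R a (subst α r) := heq ▸ Rw.rule hp α
          have hsn' : SNt R (subst α r) := snt_step hsn hrw
          exact ⟨subst α r, subst_eval hsn', hsn, hrw⟩
    · -- no ground terms at all
      refine ⟨PUnit, ⟨PUnit.unit⟩, fun _ _ => none, fun _ _ => False, ?_, ?_, ?_, ?_⟩
      · intro f
        exact ⟨fun v i b hb => hb.elim, fun v i b x y hb => hb.elim⟩
      · rintro ⟨f, hf⟩
        exact hf 0
      · intro t _
        exact (hNE ⟨t⟩).elim
      · rintro ⟨l, r⟩ hp α a ha
        cases hl : l with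
        | var x => exact ((hR _ hp).1 x hl).elim
        | app f ts =>
          subst hl
          cases ha with
          | app as hts hI => exact absurd hI (by simp)
  · rintro ⟨A, ⟨a0⟩, I, succ, hM, hWF, hDef, hPM⟩ t ht ⟨f, hf0, hfs⟩
    haveI : Nonempty A := ⟨a0⟩
    obtain ⟨b0, hb0⟩ := hDef t ht
    exact no_inf_chain hWF (fun n a => Eval I Empty.elim (f n) a)
      ⟨b0, by simpa [hf0] using hb0⟩ (fun n a ha => step_eval hR hM hPM (hfs n) ha)

end LocalTerm
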